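/- Let N ≥ 1 be an integer and p > 2 a real number. For all x, y ∈ ℝ^N, 0 ≤ |x+y|^p − |x|^p − p|x|^{p−2}(x·y) ≤ (p(p−1)/2)·|y|²·(|x|+|y|)^{p−2}, where |·| denotes the Euclidean norm, x·y the Euclidean inner product, and |x|^{p−2}x is interpreted as 0 when x = 0. -/

import Mathlib

open Set

lemma mono_help (g g' : ℝ → ℝ) (hg : ∀ t ∈ Set.Icc (0:ℝ) 1, HasDerivAt g (g' t) t)
    (hg' : ∀ t ∈ Set.Icc (0:ℝ) 1, 0 ≤ g' t) {s : ℝ} (hs : s ∈ Set.Icc (0:ℝ) 1) :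
    g 0 ≤ g s := by
  have hmono : MonotoneOn g (Set.Icc 0 1) := by
    apply monotoneOn_of_deriv_nonneg (convex_Icc 0 1)
      (fun t ht => (hg t ht).continuousAt.continuousWithinAt)
    · intro t ht
      rw [interior_Icc] at ht
      exact (hg t (Ioo_subset_Icc_self ht)).differentiableAt.differentiableWithinAt
    · intro t ht
      rw [interior_Icc] at ht
      rw [(hg t (Ioo_subset_Icc_self ht)).deriv]
      exact hg' t (Ioo_subset_Icc_self ht)
  exact hmono (by constructor <;> norm_num) hs hs.1

lemma core (p a b c : ℝ) (hp : 2 < p) (ha : 0 ≤ a) (hb : 0 ≤ b) (hc : c^2 ≤ a^2*b^2)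
    (hq : ∀ t : ℝ, 0 < a^2 + 2*c*t + t^2*b^2) :
    0 ≤ (a^2+2*c+b^2)^(p/2) - (a^2)^(p/2) - p*(a^2)^((p-2)/2)*c ∧
    (a^2+2*c+b^2)^(p/2) - (a^2)^(p/2) - p*(a^2)^((p-2)/2)*c ≤ p*(p-1)/2*b^2*(a+b)^(p-2) := by
  set q : ℝ → ℝ := fun t => a^2 + 2*c*t + t^2*b^2 with hqdef
  set f : ℝ → ℝ := fun t => q t ^ (p/2) with hfdef
  set f' : ℝ → ℝ := fun t => p * (q t ^ ((p-2)/2) * (c + t*b^2)) with hf'def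
  set f'' : ℝ → ℝ := fun t =>
    p*(p-2) * q t ^ ((p-4)/2) * (c + t*b^2)^2 + p * (q t ^ ((p-2)/2)) * b^2 with hf''def
  have hqt : ∀ t : ℝ, 0 < q t := hq
  have hq' : ∀ t : ℝ, HasDerivAt q (2*c + 2*t*b^2) t := by
    intro t
    have h : HasDerivAt (fun t : ℝ => a^2 + 2*c*t + t^2*b^2)
        (0 + 2*c*1 + (↑2*t^1)*b^2) t :=
      (((hasDerivAt_const t (a^2)).add ((hasDerivAt_id t).const_mul (2*c))).add
        ((hasDerivAt_pow 2 t).mul_const (b^2)))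
    convert h using 1
    push_cast; ring
  have hdf : ∀ t : ℝ, HasDerivAt f (f' t) t := by
    intro t
    have h := (Real.hasDerivAt_rpow_const (x := q t) (p := p/2)
      (Or.inl (hqt t).ne')).comp t (hq' t)
    refine h.congr_deriv ?_
    simp only [hf'def]
    rw [show p/2 - 1 = (p-2)/2 by ring]
    ring
  have hdf' : ∀ t : ℝ, HasDerivAt f' (f'' t) t := by
    intro t
    have hu := (Real.hasDerivAt_rpow_const (x := q t) (p := (p-2)/2)
      (Or.inl (hqt t).ne')).comp t (hq' t)
    have hv : HasDerivAt (fun t : ℝ => c + t*b^2) (b^2) t := by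
      exact ((hasDerivAt_const t c).add ((hasDerivAt_id t).mul_const (b^2))).congr_deriv (by ring)
    have h := (hu.mul hv).const_mul p
    simp only [Function.comp_apply] at h
    refine h.congr_deriv ?_
    simp only [hf''def]
    rw [show (p-2)/2 - 1 = (p-4)/2 by ring]
    ring
  have hX4 : ∀ t : ℝ, (0:ℝ) < q t ^ ((p-4)/2) := fun t => Real.rpow_pos_of_pos (hqt t) _
  have hX2 : ∀ t : ℝ, (0:ℝ) < q t ^ ((p-2)/2) := fun t => Real.rpow_pos_of_pos (hqt t) _
  have hf''nonneg : ∀ t : ℝ, 0 ≤ f'' t := by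
    intro t
    have hA : 0 ≤ p*(p-2) * q t ^ ((p-4)/2) * (c + t*b^2)^2 :=
      mul_nonneg (mul_nonneg (by nlinarith) (hX4 t).le) (sq_nonneg _)
    have hB : 0 ≤ p * (q t ^ ((p-2)/2)) * b^2 :=
      mul_nonneg (mul_nonneg (by linarith) (hX2 t).le) (sq_nonneg b)
    simp only [hf''def]
    linarith
  have hcab : c ≤ a*b := by
    nlinarith [mul_nonneg ha hb, sq_nonneg (c - a*b), sq_nonneg (c + a*b)]
  set M : ℝ := p*(p-1)*b^2*(a+b)^(p-2) with hMdef
  have hf''le : ∀ t ∈ Set.Icc (0:ℝ) 1, f'' t ≤ M := by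
    intro t ht
    have hA : (c + t*b^2)^2 ≤ q t * b^2 := by
      simp only [hqdef]; nlinarith [hc]
    have hB : q t ^ ((p-4)/2) * q t = q t ^ ((p-2)/2) := by
      calc q t ^ ((p-4)/2) * q t = q t ^ ((p-4)/2) * q t ^ (1:ℝ) := by rw [Real.rpow_one]
        _ = q t ^ ((p-4)/2 + 1) := (Real.rpow_add (hqt t) _ _).symm
        _ = q t ^ ((p-2)/2) := by congr 1; ring
    have h1t : c*t ≤ a*b :=
      le_trans (mul_le_mul_of_nonneg_right hcab ht.1)
        (mul_le_of_le_one_right (mul_nonneg ha hb) ht.2)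
    have h2t : t^2*b^2 ≤ b^2 := by
      have h3 : t^2 ≤ 1 := by nlinarith [ht.1, ht.2]
      calc t^2*b^2 ≤ 1*b^2 := mul_le_mul_of_nonneg_right h3 (sq_nonneg b)
        _ = b^2 := one_mul _
    have hC : q t ≤ (a+b)^2 := by simp only [hqdef]; nlinarith [h1t, h2t]
    have hD : q t ^ ((p-2)/2) ≤ ((a+b)^2) ^ ((p-2)/2) :=
      Real.rpow_le_rpow (hqt t).le hC (by linarith)
    have hE : (((a+b)^2 : ℝ)) ^ ((p-2)/2) = (a+b)^(p-2) := by
      rw [← Real.rpow_natCast (a+b) 2, ← Real.rpow_mul (by linarith : (0:ℝ) ≤ a+b)]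
      congr 1
      push_cast; ring
    have hD' : q t ^ ((p-2)/2) ≤ (a+b)^(p-2) := by rw [← hE]; exact hD
    have hstep : p*(p-2) * q t ^ ((p-4)/2) * (c + t*b^2)^2
        ≤ p*(p-2) * q t ^ ((p-2)/2) * b^2 := by
      calc p*(p-2) * q t ^ ((p-4)/2) * (c + t*b^2)^2
          ≤ p*(p-2) * q t ^ ((p-4)/2) * (q t * b^2) :=
            mul_le_mul_of_nonneg_left hA
              (mul_nonneg (by nlinarith) (hX4 t).le)
        _ = p*(p-2) * (q t ^ ((p-4)/2) * q t) * b^2 := by ring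
        _ = p*(p-2) * q t ^ ((p-2)/2) * b^2 := by rw [hB]
    have hfin : f'' t ≤ p*(p-1) * (q t ^ ((p-2)/2)) * b^2 := by
      simp only [hf''def]; linarith
    calc f'' t ≤ p*(p-1) * (q t ^ ((p-2)/2)) * b^2 := hfin
      _ ≤ p*(p-1) * ((a+b)^(p-2)) * b^2 := by
          apply mul_le_mul_of_nonneg_right _ (sq_nonneg b)
          exact mul_le_mul_of_nonneg_left hD' (by nlinarith)
      _ = M := by rw [hMdef]; ring
  -- f' is monotone-below on [0,1]
  have hmono_f' : ∀ s ∈ Set.Icc (0:ℝ) 1, f' 0 ≤ f' s :=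
    fun s hs => mono_help f' f'' (fun t _ => hdf' t) (fun t _ => hf''nonneg t) hs
  -- lower bound
  have hlow : 0 ≤ f 1 - f 0 - f' 0 := by
    have h := mono_help (fun t => f t - (f 0 + t * f' 0)) (fun t => f' t - f' 0)
      (fun t _ => by
        exact ((hdf t).sub ((hasDerivAt_const t (f 0)).add
          ((hasDerivAt_id t).mul_const (f' 0)))).congr_deriv (by ring))
      (fun t ht => sub_nonneg.2 (hmono_f' t ht))
      (show (1:ℝ) ∈ Set.Icc (0:ℝ) 1 by constructor <;> norm_num)
    linarith
  -- upper bound step: f' t - f' 0 ≤ M * t on [0,1]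
  have hup1 : ∀ t ∈ Set.Icc (0:ℝ) 1, f' t - f' 0 ≤ M * t := by
    intro t ht
    have h := mono_help (fun s => M * s - f' s) (fun s => M - f'' s)
      (fun s _ => by exact (((hasDerivAt_id s).const_mul M).sub (hdf' s)).congr_deriv (by ring))
      (fun s hs => sub_nonneg.2 (hf''le s hs)) ht
    linarith
  have hup : f 1 - f 0 - f' 0 ≤ M / 2 := by
    have h := mono_help (fun t => (f 0 + t * f' 0 + M*t^2/2) - f t)
      (fun t => f' 0 + M * t - f' t)
      (fun t _ => by
        have h1 : HasDerivAt (fun t : ℝ => f 0 + t * f' 0 + M*t^2/2)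
            (f' 0 + M * t) t := by
          have := ((hasDerivAt_const t (f 0)).add ((hasDerivAt_id t).mul_const (f' 0))).add
            (((hasDerivAt_pow 2 t).const_mul M).div_const 2)
          exact this.congr_deriv (by push_cast; ring)
        exact h1.sub (hdf t))
      (fun t ht => by
        have := hup1 t ht
        linarith)
      (show (1:ℝ) ∈ Set.Icc (0:ℝ) 1 by constructor <;> norm_num)
    linarith
  have hf1 : f 1 = (a^2+2*c+b^2)^(p/2) := by
    simp only [hfdef, hqdef]; norm_num
  have hf0 : f 0 = (a^2)^(p/2) := by
    simp only [hfdef, hqdef]; norm_num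
  have hf'0 : f' 0 = p*(a^2)^((p-2)/2)*c := by
    simp only [hf'def, hqdef]; norm_num; ring
  rw [hf1, hf0, hf'0] at hlow hup
  exact ⟨hlow, by rw [hMdef] at hup; linarith⟩

lemma scalar (p a b c : ℝ) (hp : 2 < p) (ha : 0 ≤ a) (hb : 0 ≤ b) (hc : c^2 ≤ a^2*b^2) :
    0 ≤ (a^2+2*c+b^2)^(p/2) - (a^2)^(p/2) - p*(a^2)^((p-2)/2)*c ∧
    (a^2+2*c+b^2)^(p/2) - (a^2)^(p/2) - p*(a^2)^((p-2)/2)*c ≤ p*(p-1)/2*b^2*(a+b)^(p-2) := by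
  rcases eq_or_lt_of_le hb with hb0 | hbpos
  · -- b = 0
    have hb0 : b = 0 := hb0.symm
    subst hb0
    have hc0 : c = 0 := by
      have h2 : c^2 ≤ 0 := by nlinarith [hc]
      have h3 : c^2 = 0 := le_antisymm h2 (sq_nonneg c)
      exact pow_eq_zero_iff (n := 2) (by norm_num) |>.1 h3
    subst hc0
    norm_num
  rcases eq_or_lt_of_le ha with ha0 | hapos
  · -- a = 0
    have ha0 : a = 0 := ha0.symm
    subst ha0
    have hc0 : c = 0 := by
      have h2 : c^2 ≤ 0 := by nlinarith [hc]
      have h3 : c^2 = 0 := le_antisymm h2 (sq_nonneg c)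
      exact pow_eq_zero_iff (n := 2) (by norm_num) |>.1 h3
    subst hc0
    have hz : ((0:ℝ)^2 : ℝ) = 0 := by norm_num
    rw [hz]
    rw [Real.zero_rpow (ne_of_gt (by linarith : (0:ℝ) < p/2)), Real.zero_rpow
      (ne_of_gt (by linarith : (0:ℝ) < (p-2)/2))]
    have hbp : (b^2)^(p/2) = b^2 * b^(p-2) := by
      rw [← Real.rpow_natCast b 2, ← Real.rpow_mul hb]
      rw [show ((2:ℕ):ℝ) * (p/2) = 2 + (p-2) by push_cast; ring]
      rw [Real.rpow_add hbpos]
      norm_num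
    have hfac : (1:ℝ) ≤ p*(p-1)/2 := by nlinarith
    have hbb : (0:ℝ) ≤ b^2 * b^(p-2) :=
      mul_nonneg (sq_nonneg b) (Real.rpow_nonneg hb _)
    constructor
    · simp only [mul_zero, sub_zero, zero_add]
      positivity
    · simp only [mul_zero, sub_zero, zero_add]
      rw [hbp]
      nlinarith
  · -- a, b > 0 : closure argument
    set F : ℝ → ℝ := fun c => (a^2+2*c+b^2)^(p/2) - (a^2)^(p/2) - p*(a^2)^((p-2)/2)*c
      with hFdef
    have hFcont : Continuous F := by
      apply Continuous.sub
      apply Continuous.sub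
      · apply Continuous.rpow_const
        · continuity
        · intro x; right; positivity
      · exact continuous_const
      · exact continuous_const.mul continuous_id
    have hclosed : IsClosed {c : ℝ | 0 ≤ F c ∧ F c ≤ p*(p-1)/2*b^2*(a+b)^(p-2)} := by
      have : {c : ℝ | 0 ≤ F c ∧ F c ≤ p*(p-1)/2*b^2*(a+b)^(p-2)}
          = F ⁻¹' (Set.Icc 0 (p*(p-1)/2*b^2*(a+b)^(p-2))) := rfl
      rw [this]
      exact IsClosed.preimage hFcont isClosed_Icc
    have hsub : Set.Ioo (-(a*b)) (a*b) ⊆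
        {c : ℝ | 0 ≤ F c ∧ F c ≤ p*(p-1)/2*b^2*(a+b)^(p-2)} := by
      intro c hcmem
      have hclt : c^2 < a^2*b^2 := by
        rcases hcmem with ⟨h1, h2⟩
        nlinarith
      have hq : ∀ t : ℝ, 0 < a^2 + 2*c*t + t^2*b^2 := by
        intro t
        nlinarith [sq_nonneg (c + t*b^2), hbpos]
      exact core p a b c hp ha hb hclt.le hq
    have hmem : c ∈ Set.Icc (-(a*b)) (a*b) := by
      constructor <;> nlinarith [sq_nonneg (c - a*b), sq_nonneg (c + a*b), mul_pos hapos hbpos]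
    have habpos : 0 < a*b := mul_pos hapos hbpos
    have := (IsClosed.closure_subset_iff hclosed).2 hsub
    rw [closure_Ioo (by linarith : -(a*b) ≠ a*b)] at this
    exact this hmem

open RealInnerProductSpace

theorem stmt_6 (N : ℕ) (hN : 1 ≤ N) (p : ℝ) (hp : 2 < p)
    (x y : EuclideanSpace ℝ (Fin N)) :
    0 ≤ ‖x + y‖ ^ p - ‖x‖ ^ p - p * ‖x‖ ^ (p - 2) * ⟪x, y⟫ ∧
    ‖x + y‖ ^ p - ‖x‖ ^ p - p * ‖x‖ ^ (p - 2) * ⟪x, y⟫ ≤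
      p * (p - 1) / 2 * ‖y‖ ^ 2 * (‖x‖ + ‖y‖) ^ (p - 2) := by
  have ha : (0:ℝ) ≤ ‖x‖ := norm_nonneg x
  have hb : (0:ℝ) ≤ ‖y‖ := norm_nonneg y
  have hcs : |⟪x, y⟫| ≤ ‖x‖ * ‖y‖ := abs_real_inner_le_norm x y
  have hc : ⟪x, y⟫^2 ≤ ‖x‖^2 * ‖y‖^2 := by
    nlinarith [abs_nonneg ⟪x, y⟫, sq_abs ⟪x, y⟫]
  have hsq : ‖x + y‖^2 = ‖x‖^2 + 2*⟪x, y⟫ + ‖y‖^2 := norm_add_sq_real x y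
  have key1 : ‖x + y‖ ^ p = (‖x‖^2 + 2*⟪x, y⟫ + ‖y‖^2) ^ (p/2) := by
    rw [← hsq, ← Real.rpow_natCast ‖x+y‖ 2, ← Real.rpow_mul (norm_nonneg _)]
    congr 1
    push_cast; ring
  have key2 : ‖x‖ ^ p = (‖x‖^2) ^ (p/2) := by
    rw [← Real.rpow_natCast ‖x‖ 2, ← Real.rpow_mul (norm_nonneg _)]
    congr 1
    push_cast; ring
  have key3 : ‖x‖ ^ (p-2) = (‖x‖^2) ^ ((p-2)/2) := by
    rw [← Real.rpow_natCast ‖x‖ 2, ← Real.rpow_mul (norm_nonneg _)]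
    congr 1
    push_cast; ring
  rw [key1, key2, key3]
  exact scalar p ‖x‖ ‖y‖ ⟪x, y⟫ hp ha hb hc
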